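/- Let δ be a derivation of a ring A, A^δ := ker δ, and suppose y^{[0]} = 1, y^{[1]}, …, y^{[m]} are elements of A with δ^i(y^{[i]}) = 1 for all 0 ≤ i ≤ m. Then there exists a unique δ-descent x^{[0]} = 1, x^{[1]}, …, x^{[m]} such that x^{[1]} = y^{[1]} and, for each 2 ≤ i ≤ m, x^{[i]} = y^{[i]} + Σ_{j=1}^{i−1} c_{ij} y^{[j]} for some elements c_{ij} ∈ A^δ. -/

import Mathlib

/-- A derivation of a ring: an additive map satisfying the Leibniz rule. -/
def IsDerivation {R : Type*} [Ring R] (δ : R → R) : Prop :=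
  (∀ a b : R, δ (a + b) = δ a + δ b) ∧ (∀ a b : R, δ (a * b) = δ a * b + a * δ b)

/-- A `δ`-descent: a finite sequence `x^{[0]} = 1, x^{[1]}, …, x^{[m]}` with
`δ(x^{[i]}) = x^{[i−1]}`. -/
def IsDescent {A : Type*} [Ring A] (δ : A → A) (m : ℕ) (x : ℕ → A) : Prop :=
  x 0 = 1 ∧ ∀ i : ℕ, 1 ≤ i → i ≤ m → δ (x i) = x (i - 1)

section helpers
variable {A : Type*} [Ring A] {δ : A → A} (hδ : IsDerivation δ)
include hδ

lemma d_zero : δ 0 = 0 := by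
  have h := hδ.1 0 0
  rw [add_zero] at h
  exact (right_eq_add.mp h)

lemma d_one : δ 1 = 0 := by
  have h := hδ.2 1 1
  rw [mul_one, one_mul, mul_one] at h
  exact (right_eq_add.mp h)

lemma d_neg (a : A) : δ (-a) = -δ a := by
  have h := hδ.1 a (-a)
  rw [add_neg_cancel, d_zero hδ] at h
  exact (neg_eq_of_add_eq_zero_right h.symm).symm

lemma d_sub (a b : A) : δ (a - b) = δ a - δ b := by
  have h := d_neg hδ b
  rw [sub_eq_add_neg, hδ.1, h, sub_eq_add_neg]

lemma d_sum {ι : Type*} (s : Finset ι) (f : ι → A) :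
    δ (∑ i ∈ s, f i) = ∑ i ∈ s, δ (f i) := by
  classical
  induction s using Finset.induction with
  | empty => simp [d_zero hδ]
  | insert _ _ h ih => rw [Finset.sum_insert h, Finset.sum_insert h, hδ.1, ih]

lemma iter_zero (k : ℕ) : δ^[k] 0 = 0 := by
  induction k with
  | zero => rfl
  | succ k ih => rw [Function.iterate_succ_apply, d_zero hδ, ih]

lemma iter_one (k : ℕ) (hk : 1 ≤ k) : δ^[k] 1 = 0 := by
  obtain ⟨n, rfl⟩ := Nat.exists_eq_add_of_le hk
  rw [add_comm, Function.iterate_succ_apply, d_one hδ, iter_zero hδ]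

lemma iter_add (k : ℕ) (a b : A) : δ^[k] (a + b) = δ^[k] a + δ^[k] b := by
  induction k generalizing a b with
  | zero => rfl
  | succ k ih => rw [Function.iterate_succ_apply, Function.iterate_succ_apply,
      Function.iterate_succ_apply, hδ.1, ih]

lemma iter_sub (k : ℕ) (a b : A) : δ^[k] (a - b) = δ^[k] a - δ^[k] b := by
  induction k generalizing a b with
  | zero => rfl
  | succ k ih => rw [Function.iterate_succ_apply, Function.iterate_succ_apply,
      Function.iterate_succ_apply, d_sub hδ, ih]

lemma iter_sum {ι : Type*} (k : ℕ) (s : Finset ι) (f : ι → A) :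
    δ^[k] (∑ i ∈ s, f i) = ∑ i ∈ s, δ^[k] (f i) := by
  induction k with
  | zero => rfl
  | succ k ih =>
    rw [Function.iterate_succ_apply', ih, d_sum hδ]
    exact Finset.sum_congr rfl fun i _ => (Function.iterate_succ_apply' δ k (f i)).symm

lemma iter_cmul (k : ℕ) (c z : A) (hc : δ c = 0) : δ^[k] (c * z) = c * δ^[k] z := by
  induction k generalizing z with
  | zero => rfl
  | succ k ih =>
    rw [Function.iterate_succ_apply, Function.iterate_succ_apply, hδ.2, hc, zero_mul,
      zero_add, ih]

end helpers

section core
variable {A : Type*} [Ring A] {δ : A → A} (hδ : IsDerivation δ)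
include hδ

lemma descent_iter (i : ℕ) (x : ℕ → A) (hx0 : x 0 = 1)
    (hxd : ∀ j, 1 ≤ j → j ≤ i → δ (x j) = x (j - 1)) :
    ∀ j, j ≤ i → δ^[j] (x j) = 1 := by
  intro j
  induction j with
  | zero => intro _; simpa using hx0
  | succ j ih =>
    intro hj
    rw [Function.iterate_succ_apply, hxd (j+1) (by omega) hj]
    simpa using ih (by omega)

lemma iter_y_zero (m : ℕ) (y : ℕ → A) (hy : ∀ i : ℕ, i ≤ m → δ^[i] (y i) = 1)
    (l k : ℕ) (hl : l < k) (hlm : l ≤ m) : δ^[k] (y l) = 0 := by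
  have hk : k - l + l = k := by omega
  rw [← hk, Function.iterate_add_apply, hy l hlm, iter_one hδ _ (by omega)]

lemma kill_lemma (m : ℕ) (y : ℕ → A) (hy : ∀ i : ℕ, i ≤ m → δ^[i] (y i) = 1) :
    ∀ k, k ≤ m → ∀ e : ℕ → A, (∀ l, δ (e l) = 0) →
      δ (∑ l ∈ Finset.Icc 1 k, e l * y l) = 0 →
      ∑ l ∈ Finset.Icc 1 k, e l * y l = 0 := by
  intro k
  induction k with
  | zero => intro _ e _ _; simp
  | succ k ih =>
    intro hk e he hz
    have hiter : δ^[k+1] (∑ l ∈ Finset.Icc 1 (k+1), e l * y l) = 0 := by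
      rw [Function.iterate_succ_apply, hz, iter_zero hδ]
    have hsum : δ^[k+1] (∑ l ∈ Finset.Icc 1 (k+1), e l * y l) = e (k+1) := by
      rw [iter_sum hδ]
      rw [Finset.sum_Icc_succ_top (by omega : 1 ≤ k+1)]
      have h1 : ∀ l ∈ Finset.Icc 1 k, δ^[k+1] (e l * y l) = 0 := by
        intro l hl
        have hl' := Finset.mem_Icc.mp hl
        rw [iter_cmul hδ _ _ _ (he l), iter_y_zero hδ m y hy l (k+1) (by omega) (by omega),
          mul_zero]
      rw [Finset.sum_congr rfl h1, Finset.sum_const_zero, zero_add,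
        iter_cmul hδ _ _ _ (he (k+1)), hy (k+1) hk, mul_one]
    have he0 : e (k+1) = 0 := by rw [← hsum, hiter]
    have hdrop : ∑ l ∈ Finset.Icc 1 (k+1), e l * y l = ∑ l ∈ Finset.Icc 1 k, e l * y l := by
      rw [Finset.sum_Icc_succ_top (by omega : 1 ≤ k+1), he0, zero_mul, add_zero]
    rw [hdrop] at hz ⊢
    exact ih (by omega) e he hz

lemma rep_lemma (i : ℕ) (x : ℕ → A) (hx0 : x 0 = 1)
    (hxd : ∀ j, 1 ≤ j → j ≤ i → δ (x j) = x (j - 1)) :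
    ∀ k, k ≤ i → ∀ z : A, δ^[k] z = 0 →
      ∃ c : ℕ → A, (∀ l, δ (c l) = 0) ∧ z = ∑ j ∈ Finset.range k, c j * x j := by
  intro k
  induction k with
  | zero => intro _ z hz; exact ⟨0, by simp [d_zero hδ], by simpa using hz⟩
  | succ k ih =>
    intro hk z hz
    have hz' : δ^[k] (δ z) = 0 := by rwa [← Function.iterate_succ_apply]
    obtain ⟨c, hc, hrep⟩ := ih (by omega) (δ z) hz'
    set w := z - ∑ j ∈ Finset.range k, c j * x (j+1) with hw
    have hdw : δ w = 0 := by
      rw [hw, d_sub hδ, d_sum hδ, hrep]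
      have h1 : ∀ j ∈ Finset.range k, δ (c j * x (j+1)) = c j * x j := by
        intro j hj
        have hj' := Finset.mem_range.mp hj
        rw [hδ.2, hc, zero_mul, zero_add, hxd (j+1) (by omega) (by omega)]
        simp
      rw [Finset.sum_congr rfl h1, sub_self]
    refine ⟨fun j => if j = 0 then w else c (j-1), ?_, ?_⟩
    · intro l
      by_cases h : l = 0 <;> simp [h, hdw, hc]
    · rw [Finset.sum_range_succ']
      have h2 : (∑ j ∈ Finset.range k, (if j + 1 = 0 then w else c (j + 1 - 1)) * x (j + 1))
          = ∑ j ∈ Finset.range k, c j * x (j + 1) := by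
        refine Finset.sum_congr rfl fun j _ => ?_
        simp
      rw [h2]
      show z = _ + (if (0:ℕ) = 0 then w else c (0-1)) * x 0
      rw [if_pos rfl, hx0, mul_one, hw]
      generalize ∑ j ∈ Finset.range k, c j * x (j + 1) = S
      abel
end core

section main
variable {A : Type*} [Ring A] {δ : A → A} (hδ : IsDerivation δ)
include hδ

lemma exists_Q (m : ℕ) (y : ℕ → A) (hy : ∀ i : ℕ, i ≤ m → δ^[i] (y i) = 1) :
    ∀ i, i ≤ m → ∃ x : ℕ → A, x 0 = 1 ∧ x 1 = y 1 ∧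
      (∀ j, 1 ≤ j → j ≤ i → δ (x j) = x (j - 1)) ∧
      (∀ j, 1 ≤ j → j ≤ i → ∃ c : ℕ → A, (∀ l, δ (c l) = 0) ∧ c j = 1 ∧
        (∀ l, l ∉ Finset.Icc 1 j → c l = 0) ∧ x j = ∑ l ∈ Finset.Icc 1 j, c l * y l) := by
  intro i
  induction i with
  | zero =>
    intro _
    refine ⟨fun j => if j = 0 then 1 else y 1, by simp, by simp, ?_, ?_⟩ <;>
      (intro j h1 h2; omega)
  | succ i ih =>
    intro him
    obtain ⟨x, hx0, hx1, hxd, hrep⟩ := ih (by omega)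
    rcases Nat.eq_zero_or_pos i with hi0 | hipos
    · -- i = 0 : extend to j = 1 with x 1 = y 1
      subst hi0
      refine ⟨x, hx0, hx1, ?_, ?_⟩
      · intro j h1 h2
        have hj : j = 1 := by omega
        subst hj
        have h := hy 1 him
        rw [Function.iterate_one] at h
        simpa [hx1, hx0] using h
      · intro j h1 h2
        have hj : j = 1 := by omega
        subst hj
        refine ⟨fun l => if l = 1 then 1 else 0, ?_, by simp, ?_, ?_⟩
        · intro l; by_cases h : l = 1 <;> simp [h, d_one hδ, d_zero hδ]
        · intro l hl
          beta_reduce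
          rw [if_neg (by simpa using hl)]
        · simp [hx1]
    · -- i ≥ 1, construct x (i+1)
      have hdi : δ^[i] (x i) = 1 := descent_iter hδ i x hx0 hxd i le_rfl
      have hu : δ^[i] (δ (y (i+1)) - x i) = 0 := by
        rw [iter_sub hδ, hdi, ← Function.iterate_succ_apply, hy (i+1) him, sub_self]
      obtain ⟨c, hc, hcu⟩ := rep_lemma hδ i x hx0 hxd i le_rfl _ hu
      set S := ∑ j ∈ Finset.range i, c j * x (j+1) with hSdef
      have hdS : δ S = δ (y (i+1)) - x i := by
        rw [hSdef, d_sum hδ]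
        have h1 : ∀ j ∈ Finset.range i, δ (c j * x (j+1)) = c j * x j := by
          intro j hj
          have hj' := Finset.mem_range.mp hj
          rw [hδ.2, hc, zero_mul, zero_add, hxd (j+1) (by omega) (by omega)]
          simp
        rw [Finset.sum_congr rfl h1, ← hcu]
      refine ⟨fun j => if j = i+1 then y (i+1) - S else x j, ?_, ?_, ?_, ?_⟩
      · beta_reduce
        rw [if_neg (by omega : ¬(0:ℕ) = i + 1)]; exact hx0
      · beta_reduce
        rw [if_neg (by omega : ¬(1:ℕ) = i + 1)]; exact hx1
      · intro j h1 h2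
        by_cases hj : j = i + 1
        · subst hj
          beta_reduce
          rw [Nat.add_sub_cancel, if_pos rfl, if_neg (by omega : ¬i = i + 1), d_sub hδ, hdS]
          abel
        · beta_reduce
          rw [if_neg hj, if_neg (by omega : ¬j - 1 = i + 1)]
          exact hxd j h1 (by omega)
      · intro j h1 h2
        by_cases hj : j = i + 1
        · subst hj
          -- coefficient families for x (j+1), j < i
          have hd : ∀ j, ∃ d : ℕ → A, (∀ l, δ (d l) = 0) ∧
              (∀ l, l ∉ Finset.Icc 1 i → d l = 0) ∧
              (j < i → c j * x (j+1) = ∑ l ∈ Finset.Icc 1 i, d l * y l) := by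
            intro j
            by_cases hji : j < i
            · obtain ⟨d0, hd0c, _, hd0s, hd0x⟩ := hrep (j+1) (by omega) (by omega)
              refine ⟨fun l => c j * d0 l, ?_, ?_, fun _ => ?_⟩
              · intro l; rw [hδ.2, hc, hd0c, zero_mul, mul_zero, add_zero]
              · intro l hl
                beta_reduce
                have : l ∉ Finset.Icc 1 (j+1) := by
                  intro hmem
                  exact hl (Finset.Icc_subset_Icc_right (by omega) hmem)
                rw [hd0s l this, mul_zero]
              · beta_reduce
                calc c j * x (j+1) = ∑ l ∈ Finset.Icc 1 (j+1), c j * d0 l * y l := by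
                      rw [hd0x, Finset.mul_sum]
                      exact Finset.sum_congr rfl fun l _ => (mul_assoc _ _ _).symm
                  _ = ∑ l ∈ Finset.Icc 1 i, c j * d0 l * y l :=
                      Finset.sum_subset (Finset.Icc_subset_Icc_right (by omega : j+1 ≤ i))
                        (fun l _ hl' => by rw [hd0s l hl', mul_zero, zero_mul])
            · exact ⟨0, by simp [d_zero hδ], by simp, fun h => absurd h hji⟩
          choose d hd1 hd2 hd3 using hd
          set e := fun l => ∑ j ∈ Finset.range i, d j l with hedef
          have hS : S = ∑ l ∈ Finset.Icc 1 i, e l * y l := by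
            rw [hSdef,
              Finset.sum_congr rfl fun j hj => hd3 j (Finset.mem_range.mp hj),
              Finset.sum_comm]
            exact Finset.sum_congr rfl fun l _ => (Finset.sum_mul _ _ _).symm
          refine ⟨fun l => if l = i+1 then 1 else -(e l), ?_, by simp, ?_, ?_⟩
          · intro l
            beta_reduce
            by_cases h : l = i+1
            · simp [h, d_one hδ]
            · rw [if_neg h, d_neg hδ, hedef, d_sum hδ,
                Finset.sum_congr rfl fun j _ => hd1 j l, Finset.sum_const_zero, neg_zero]
          · intro l hl
            beta_reduce
            rw [if_neg (show ¬l = i + 1 by rintro rfl; exact hl (by simp))]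
            have : l ∉ Finset.Icc 1 i := by
              intro hmem
              exact hl (Finset.Icc_subset_Icc_right (by omega) hmem)
            rw [hedef]
            simp only []
            rw [Finset.sum_congr rfl fun j _ => hd2 j l this, Finset.sum_const_zero, neg_zero]
          · beta_reduce
            rw [if_pos rfl, Finset.sum_Icc_succ_top (by omega : 1 ≤ i+1),
              if_pos rfl, one_mul, hS]
            have : ∀ l ∈ Finset.Icc 1 i,
                (if l = i+1 then (1:A) else -(e l)) * y l = -(e l * y l) := by
              intro l hl
              have hl' := Finset.mem_Icc.mp hl
              rw [if_neg (by omega), neg_mul]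
            rw [Finset.sum_congr rfl this, Finset.sum_neg_distrib]
            abel
        · beta_reduce
          rw [if_neg hj]
          obtain ⟨c', h1', h2', h3', h4'⟩ := hrep j h1 (by omega)
          exact ⟨c', h1', h2', h3', h4'⟩
end main

theorem stmt12 {A : Type*} [Ring A] (δ : A → A) (hδ : IsDerivation δ)
    (m : ℕ) (y : ℕ → A) (hy : ∀ i : ℕ, i ≤ m → δ^[i] (y i) = 1) :
    -- existence of a `δ`-descent of the required form
    (∃ x : ℕ → A, IsDescent δ m x ∧ x 1 = y 1 ∧
      (∀ i : ℕ, 2 ≤ i → i ≤ m → ∃ c : ℕ → A, (∀ j, δ (c j) = 0) ∧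
        x i = y i + ∑ j ∈ Finset.Icc 1 (i - 1), c j * y j)) ∧
    -- uniqueness: any two such `δ`-descents agree on `0, 1, …, m`
    (∀ x x' : ℕ → A,
      (IsDescent δ m x ∧ x 1 = y 1 ∧
        (∀ i : ℕ, 2 ≤ i → i ≤ m → ∃ c : ℕ → A, (∀ j, δ (c j) = 0) ∧
          x i = y i + ∑ j ∈ Finset.Icc 1 (i - 1), c j * y j)) →
      (IsDescent δ m x' ∧ x' 1 = y 1 ∧
        (∀ i : ℕ, 2 ≤ i → i ≤ m → ∃ c : ℕ → A, (∀ j, δ (c j) = 0) ∧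
          x' i = y i + ∑ j ∈ Finset.Icc 1 (i - 1), c j * y j)) →
      ∀ i : ℕ, i ≤ m → x i = x' i) := by
  constructor
  · -- existence
    obtain ⟨x, hx0, hx1, hxd, hrep⟩ := exists_Q hδ m y hy m le_rfl
    refine ⟨x, ⟨hx0, hxd⟩, hx1, ?_⟩
    intro i h2 hm
    obtain ⟨c, hc, hc1, hcs, hcx⟩ := hrep i (by omega) hm
    refine ⟨c, hc, ?_⟩
    obtain ⟨n, rfl⟩ : ∃ n, i = n + 1 := ⟨i - 1, by omega⟩
    rw [Nat.add_sub_cancel, hcx, Finset.sum_Icc_succ_top (by omega : 1 ≤ n + 1), hc1, one_mul]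
    abel
  · -- uniqueness
    rintro x x' ⟨⟨hx0, hxd⟩, hx1, hxr⟩ ⟨⟨hx0', hxd'⟩, hx1', hxr'⟩ i
    induction i using Nat.strong_induction_on with
    | _ i ih =>
      intro him
      match i, him with
      | 0, _ => rw [hx0, hx0']
      | 1, _ => rw [hx1, hx1']
      | (n+2), him =>
        obtain ⟨c, hc, hcx⟩ := hxr (n+2) (by omega) him
        obtain ⟨c', hc', hcx'⟩ := hxr' (n+2) (by omega) him
        have hprev : x (n+1) = x' (n+1) := ih (n+1) (by omega) (by omega)
        have hdz : δ (x (n+2) - x' (n+2)) = 0 := by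
          rw [d_sub hδ, hxd (n+2) (by omega) him, hxd' (n+2) (by omega) him]
          simpa using sub_eq_zero.mpr hprev
        have hform : x (n+2) - x' (n+2)
            = ∑ l ∈ Finset.Icc 1 (n+1), (c l - c' l) * y l := by
          have hsub : ∑ l ∈ Finset.Icc 1 (n+1), c l * y l
                - ∑ l ∈ Finset.Icc 1 (n+1), c' l * y l
              = ∑ l ∈ Finset.Icc 1 (n+1), (c l - c' l) * y l := by
            rw [← Finset.sum_sub_distrib]
            exact Finset.sum_congr rfl fun l _ => (sub_mul _ _ _).symm
          rw [hcx, hcx', show n + 2 - 1 = n + 1 from rfl, ← hsub]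
          abel
        have hzero : ∑ l ∈ Finset.Icc 1 (n+1), (c l - c' l) * y l = 0 := by
          refine kill_lemma hδ m y hy (n+1) (by omega) _ ?_ ?_
          · intro l; rw [d_sub hδ, hc, hc', sub_zero]
          · rw [← hform]; exact hdz
        have := hform.trans hzero
        exact sub_eq_zero.mp this
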